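/- Let G be a finite group. Then the girth of the complement of the enhanced power graph of G is either 3 or infinity; more precisely, if G is cyclic the girth is infinity (the graph has no cycles), and if G is non-cyclic the girth is 3. -/

import Mathlib

/-- A subgroup `M` of `G` is a maximal cyclic subgroup if it is cyclic and is not properly
contained in any cyclic subgroup of `G` other than itself. -/
def IsMaximalCyclic {G : Type*} [Group G] (M : Subgroup G) : Prop :=
  (∃ g : G, M = Subgroup.zpowers g) ∧
    ∀ K : Subgroup G, (∃ g : G, K = Subgroup.zpowers g) → M ≤ K → M = K

/-- The complement of the enhanced power graph of a group `G`: distinct `x, y` are adjacent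
iff no cyclic subgroup of `G` contains both. -/
def coPE (G : Type*) [Group G] : SimpleGraph G where
  Adj x y := x ≠ y ∧ ¬∃ z : G, x ∈ Subgroup.zpowers z ∧ y ∈ Subgroup.zpowers z
  symm := by
    constructor
    rintro x y ⟨h1, h2⟩
    exact ⟨h1.symm, fun ⟨z, hz⟩ => h2 ⟨z, hz.2, hz.1⟩⟩
  loopless := by constructor; rintro x ⟨h, -⟩; exact h rfl

lemma exists_maximal_cyclic {G : Type*} [Group G] [Finite G] (g : G) :
    ∃ M : Subgroup G, IsMaximalCyclic M ∧ g ∈ M := by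
  classical
  let S : Set (Subgroup G) := {K | (∃ z : G, K = Subgroup.zpowers z) ∧ g ∈ K}
  have hfin : S.Finite := Set.toFinite S
  have hne : S.Nonempty := ⟨Subgroup.zpowers g, ⟨g, rfl⟩, Subgroup.mem_zpowers g⟩
  obtain ⟨M, hM, hmax⟩ := hfin.exists_maximal hne
  refine ⟨M, ⟨hM.1, fun K hK hMK => ?_⟩, hM.2⟩
  exact le_antisymm hMK (hmax ⟨hK, hMK hM.2⟩ hMK)

theorem coPE_girth {G : Type*} [Group G] [Finite G] :
    (IsCyclic G → (coPE G).egirth = ⊤) ∧ (¬ IsCyclic G → (coPE G).egirth = 3) := by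
  constructor
  · intro hG
    have : coPE G = ⊥ := by
      ext x y
      simp only [coPE, SimpleGraph.bot_adj, iff_false]
      rintro ⟨-, h⟩
      obtain ⟨z, hz⟩ := hG.exists_generator
      exact h ⟨z, hz x, hz y⟩
    rw [this]; simp
  · intro hG
    -- find two distinct maximal cyclic subgroups
    obtain ⟨M, hM, -⟩ := exists_maximal_cyclic (1 : G)
    have hex : ∃ x : G, x ∉ M := by
      by_contra h
      push_neg at h
      obtain ⟨m, hm⟩ := hM.1
      refine hG ⟨⟨m, fun x => ?_⟩⟩
      have hx' := h x
      rw [hm] at hx'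
      exact hx'
    obtain ⟨x, hx⟩ := hex
    obtain ⟨N, hN, hxN⟩ := exists_maximal_cyclic x
    have hMN : M ≠ N := fun h => hx (h ▸ hxN)
    obtain ⟨a, ha⟩ := hM.1
    obtain ⟨b, hb⟩ := hN.1
    -- a ≠ 1, b ≠ 1
    have ha1 : a ≠ 1 := by
      rintro rfl
      have hle : M ≤ N := by rw [ha, Subgroup.zpowers_one_eq_bot]; exact bot_le
      exact hMN (hM.2 N hN.1 hle)
    have hb1 : b ≠ 1 := by
      rintro rfl
      have hle : N ≤ M := by rw [hb, Subgroup.zpowers_one_eq_bot]; exact bot_le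
      exact hMN (hN.2 M hM.1 hle).symm
    have hab : a ≠ b := by
      rintro rfl; exact hMN (ha.trans hb.symm)
    -- key: no cyclic subgroup contains both a and b
    have key : ¬∃ z : G, a ∈ Subgroup.zpowers z ∧ b ∈ Subgroup.zpowers z := by
      rintro ⟨z, hza, hzb⟩
      have h1 : M ≤ Subgroup.zpowers z := by
        rw [ha]; exact (Subgroup.zpowers_le).mpr hza
      have h2 : N ≤ Subgroup.zpowers z := by
        rw [hb]; exact (Subgroup.zpowers_le).mpr hzb
      exact hMN ((hM.2 _ ⟨z, rfl⟩ h1).trans (hN.2 _ ⟨z, rfl⟩ h2).symm)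
    -- triangle a, b, a*b
    have hAab : (coPE G).Adj a b := ⟨hab, key⟩
    have hAb : (coPE G).Adj b (a * b) := by
      refine ⟨fun h => ha1 (by simpa using h.symm), ?_⟩
      rintro ⟨z, hzb, hzab⟩
      exact key ⟨z, by simpa using mul_mem hzab (inv_mem hzb), hzb⟩
    have hAa : (coPE G).Adj (a * b) a := by
      refine ⟨fun h => hb1 (by simpa using h), ?_⟩
      rintro ⟨z, hzab, hza⟩
      exact key ⟨z, hza, by simpa using mul_mem (inv_mem hza) hzab⟩
    -- build the 3-cycle
    let w : (coPE G).Walk a a :=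
      .cons hAab (.cons hAb (.cons hAa .nil))
    have hcyc : w.IsCycle := by
      rw [SimpleGraph.Walk.cons_isCycle_iff]
      constructor
      · rw [SimpleGraph.Walk.isPath_def]
        simp only [SimpleGraph.Walk.support_cons, SimpleGraph.Walk.support_nil]
        have h1 : b ≠ a * b := hAb.ne
        have h2 : a * b ≠ a := hAa.ne
        simp [List.nodup_cons, hab.symm, h1, h2, hAb.ne]
      · simp only [SimpleGraph.Walk.edges_cons, SimpleGraph.Walk.edges_nil,
          List.mem_cons, List.not_mem_nil, or_false]
        push_neg
        constructor
        · intro h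
          rw [Sym2.eq_iff] at h
          rcases h with ⟨h1, -⟩ | ⟨h1, -⟩
          · exact hab h1
          · exact hb1 (by simpa using h1.symm)
        · intro h
          rw [Sym2.eq_iff] at h
          rcases h with ⟨h1, -⟩ | ⟨-, h2⟩
          · exact hb1 (by simpa using h1.symm)
          · exact ha1 (by simpa using h2)
    have hlen : w.length = 3 := rfl
    refine le_antisymm ?_ SimpleGraph.three_le_egirth
    have := SimpleGraph.le_egirth.mp (le_refl (coPE G).egirth) a w hcyc
    rw [hlen] at this
    exact_mod_cast this
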